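/- Let Φ and Φ₁ be Orlicz functions and n ≥ 2, 0 < k < n with 2k ≤ n. For g(x) = x^k (1-x)^{n-k} on [0,1] extended by 0, and for any Δ > 0, with the Amemiya norms over (0,Δ): ‖T_Δ g‖_{L(Φ)} ≥ (k^k (n-k)^{n-k}/(n+1)^n) · φ(L(Φ), Δ/(n+1)), where (T_Δ g)(x) = g(x/Δ) and φ(L(Φ), δ) = inf_{v>0} v^{-1}(1 + δΦ(v)). -/

import Mathlib

open MeasureTheory intervalIntegral

/-- Lower bound for the Amemiya–Orlicz norm of the dilated function
`T_Δ g`, where `g x = x^k (1-x)^(n-k)` on `[0,1]` (extended by zero):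
`‖T_Δ g‖_{L(Φ)} ≥ (k^k (n-k)^(n-k)/(n+1)^n) · φ(L(Φ), Δ/(n+1))`. -/
theorem amemiya_norm_dilated_gnk_lower (Φ : ℝ → ℝ) (hΦ0 : Φ 0 = 0)
    (hΦmono : MonotoneOn Φ (Set.Ici 0)) (hΦnonneg : ∀ u, 0 ≤ u → 0 ≤ Φ u)
    (hΦconv : ConvexOn ℝ (Set.Ici 0) Φ)
    (n k : ℕ) (hn : 2 ≤ n) (hk0 : 0 < k) (hkn : k < n) (h2k : 2 * k ≤ n)
    (Δ : ℝ) (hΔ : 0 < Δ)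
    (g : ℝ → ℝ)
    (hg : ∀ x : ℝ, g x = if x ∈ Set.Icc (0:ℝ) 1 then x ^ k * (1 - x) ^ (n - k) else 0) :
    (⨅ v : Set.Ioi (0:ℝ),
        ((v : ℝ))⁻¹ * (1 + ∫ x in (0:ℝ)..Δ, Φ ((v : ℝ) * |g (x / Δ)|))) ≥
      ((k : ℝ) ^ k * ((n : ℝ) - k) ^ (n - k) / ((n : ℝ) + 1) ^ n) *
        ⨅ v : Set.Ioi (0:ℝ), ((v : ℝ))⁻¹ * (1 + (Δ / ((n : ℝ) + 1)) * Φ (v : ℝ)) := by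
  have hkR : (0:ℝ) < (k:ℝ) := by exact_mod_cast hk0
  have hknR : (k:ℝ) < (n:ℝ) := by exact_mod_cast hkn
  have hn1 : (0:ℝ) < (n:ℝ) + 1 := by positivity
  have hnkR : (0:ℝ) < (n:ℝ) - (k:ℝ) := by linarith
  set c : ℝ := (k : ℝ) ^ k * ((n : ℝ) - k) ^ (n - k) / ((n : ℝ) + 1) ^ n with hc_def
  have hc : 0 < c :=
    div_pos (mul_pos (pow_pos hkR _) (pow_pos hnkR _)) (pow_pos hn1 _)
  set δ : ℝ := Δ / ((n:ℝ) + 1) with hδ_def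
  have hδ : 0 < δ := div_pos hΔ hn1
  -- g takes values in [0,1]
  have hg01 : ∀ x : ℝ, 0 ≤ g x ∧ g x ≤ 1 := by
    intro x
    rw [hg x]
    split
    · rename_i hx
      obtain ⟨hx0, hx1⟩ := hx
      exact ⟨mul_nonneg (pow_nonneg hx0 _) (pow_nonneg (by linarith) _),
        mul_le_one₀ (pow_le_one₀ hx0 hx1) (pow_nonneg (by linarith) _)
          (pow_le_one₀ (by linarith) (by linarith))⟩
    · norm_num
  have hgmeas : Measurable g := by
    have hgfun : g = fun x =>
        if x ∈ Set.Icc (0:ℝ) 1 then x ^ k * (1 - x) ^ (n - k) else 0 := funext hg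
    rw [hgfun]
    exact Measurable.ite measurableSet_Icc ((measurable_id.pow_const k).mul ((measurable_const.sub measurable_id).pow_const (n - k))) measurable_const
  -- monotone extension of Φ
  set Ψ : ℝ → ℝ := fun u => Φ (max u 0) with hΨ_def
  have hΨmono : Monotone Ψ := fun u u' h =>
    hΦmono (le_max_right u 0) (le_max_right u' 0) (max_le_max h le_rfl)
  have hΨeq : ∀ u : ℝ, 0 ≤ u → Ψ u = Φ u := fun u hu => by
    simp only [hΨ_def, max_eq_left hu]
  have hΨnonneg : ∀ u : ℝ, 0 ≤ Ψ u := fun u => hΦnonneg _ (le_max_right _ _)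
  -- endpoints of the good interval
  set a : ℝ := Δ * k / ((n:ℝ) + 1) with ha_def
  set b : ℝ := Δ * ((k:ℝ) + 1) / ((n:ℝ) + 1) with hb_def
  have ha0 : 0 ≤ a := by positivity
  have hab : a ≤ b := by
    rw [ha_def, hb_def]
    gcongr
    linarith
  have hbΔ : b ≤ Δ := by
    rw [hb_def, div_le_iff₀ hn1]
    have : (k:ℝ) + 1 ≤ (n:ℝ) + 1 := by linarith
    nlinarith
  have hba : b - a = δ := by
    rw [hb_def, ha_def, hδ_def]
    ring
  -- pointwise lower bound on the good interval
  have hgc : ∀ x ∈ Set.Icc a b, c ≤ g (x / Δ) := by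
    intro x hx
    obtain ⟨hxa, hxb⟩ := hx
    have hy1 : (k:ℝ) / ((n:ℝ) + 1) ≤ x / Δ := by
      rw [div_le_div_iff₀ hn1 hΔ]
      rw [ha_def, div_le_iff₀ hn1] at hxa
      linarith
    have hy2 : x / Δ ≤ ((k:ℝ) + 1) / ((n:ℝ) + 1) := by
      rw [div_le_div_iff₀ hΔ hn1]
      rw [hb_def, le_div_iff₀ hn1] at hxb
      linarith
    have hy0 : 0 ≤ x / Δ := le_trans (by positivity) hy1
    have hyle1 : x / Δ ≤ 1 := le_trans hy2 (by
      rw [div_le_one hn1]; linarith)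
    have h1y : ((n:ℝ) - k) / ((n:ℝ) + 1) ≤ 1 - x / Δ := by
      have h1 : 1 - ((k:ℝ) + 1) / ((n:ℝ) + 1) = ((n:ℝ) - k) / ((n:ℝ) + 1) := by
        field_simp; ring
      linarith
    rw [hg (x / Δ), if_pos ⟨hy0, hyle1⟩]
    have hm := mul_le_mul (pow_le_pow_left₀ (by positivity) hy1 k)
      (pow_le_pow_left₀ (by positivity) h1y (n - k))
      (pow_nonneg (by positivity) _) (pow_nonneg hy0 _)
    calc c = ((k:ℝ) / ((n:ℝ) + 1)) ^ k * (((n:ℝ) - k) / ((n:ℝ) + 1)) ^ (n - k) := by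
            rw [hc_def, div_pow, div_pow, div_mul_div_comm, ← pow_add,
              Nat.add_sub_cancel' hkn.le]
      _ ≤ (x / Δ) ^ k * (1 - x / Δ) ^ (n - k) := hm
  -- main pointwise estimate for each v > 0
  rw [ge_iff_le]
  have hGbdd : BddBelow (Set.range fun v : Set.Ioi (0:ℝ) =>
      ((v : ℝ))⁻¹ * (1 + δ * Φ (v : ℝ))) := by
    refine ⟨0, ?_⟩
    rintro y ⟨w, rfl⟩
    have hw : (0:ℝ) < (w:ℝ) := w.2
    have hΦw : 0 ≤ Φ (w:ℝ) := hΦnonneg _ hw.le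
    have : (0:ℝ) ≤ 1 + δ * Φ (w:ℝ) := by nlinarith
    positivity
  apply le_ciInf
  intro v
  have hv : (0:ℝ) < (v:ℝ) := v.2
  -- integrability
  have hmeas : Measurable fun x => Ψ ((v:ℝ) * |g (x / Δ)|) :=
    hΨmono.measurable.comp
      (measurable_const.mul ((hgmeas.comp (measurable_id.div_const Δ)).abs))
  have hbound : ∀ x : ℝ, ‖Ψ ((v:ℝ) * |g (x / Δ)|)‖ ≤ Φ (v:ℝ) := by
    intro x
    have hgx := hg01 (x / Δ)
    have habs : |g (x / Δ)| = g (x / Δ) := abs_of_nonneg hgx.1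
    have hu0 : 0 ≤ (v:ℝ) * |g (x / Δ)| := mul_nonneg hv.le (abs_nonneg _)
    have huv : (v:ℝ) * |g (x / Δ)| ≤ (v:ℝ) := by
      rw [habs]
      nlinarith [hgx.2, hgx.1]
    rw [Real.norm_eq_abs, abs_of_nonneg (hΨnonneg _), hΨeq _ hu0]
    exact hΦmono hu0 hv.le huv
  have hIntAll : ∀ p q : ℝ,
      IntervalIntegrable (fun x => Ψ ((v:ℝ) * |g (x / Δ)|)) volume p q := by
    intro p q
    refine (_root_.intervalIntegrable_const (c := Φ (v:ℝ))).mono_fun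
      hmeas.aestronglyMeasurable ?_
    filter_upwards with x
    rw [Real.norm_eq_abs (Φ (v:ℝ)), abs_of_nonneg (hΦnonneg _ hv.le)]
    exact hbound x
  -- rewrite the integrand with Ψ
  have hfeq : (fun x => Φ ((v:ℝ) * |g (x / Δ)|)) =
      fun x => Ψ ((v:ℝ) * |g (x / Δ)|) := by
    funext x
    exact (hΨeq _ (mul_nonneg hv.le (abs_nonneg _))).symm
  -- the integral lower bound
  have key : δ * Φ ((v:ℝ) * c) ≤ ∫ x in (0:ℝ)..Δ, Ψ ((v:ℝ) * |g (x / Δ)|) := by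
    have hsplit1 : (∫ x in (0:ℝ)..a, Ψ ((v:ℝ) * |g (x / Δ)|)) +
        (∫ x in a..b, Ψ ((v:ℝ) * |g (x / Δ)|)) =
        ∫ x in (0:ℝ)..b, Ψ ((v:ℝ) * |g (x / Δ)|) :=
      integral_add_adjacent_intervals (hIntAll 0 a) (hIntAll a b)
    have hsplit2 : (∫ x in (0:ℝ)..b, Ψ ((v:ℝ) * |g (x / Δ)|)) +
        (∫ x in b..Δ, Ψ ((v:ℝ) * |g (x / Δ)|)) =
        ∫ x in (0:ℝ)..Δ, Ψ ((v:ℝ) * |g (x / Δ)|) :=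
      integral_add_adjacent_intervals (hIntAll 0 b) (hIntAll b Δ)
    have hnn1 : 0 ≤ ∫ x in (0:ℝ)..a, Ψ ((v:ℝ) * |g (x / Δ)|) :=
      integral_nonneg ha0 fun x _ => hΨnonneg _
    have hnn2 : 0 ≤ ∫ x in b..Δ, Ψ ((v:ℝ) * |g (x / Δ)|) :=
      integral_nonneg hbΔ fun x _ => hΨnonneg _
    have hmid : δ * Φ ((v:ℝ) * c) ≤ ∫ x in a..b, Ψ ((v:ℝ) * |g (x / Δ)|) := by
      have hconst : (∫ _ in a..b, Φ ((v:ℝ) * c)) = δ * Φ ((v:ℝ) * c) := by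
        rw [intervalIntegral.integral_const, smul_eq_mul, hba]
      rw [← hconst]
      refine integral_mono_on hab intervalIntegrable_const (hIntAll a b) ?_
      intro x hx
      have hgx := hg01 (x / Δ)
      have habs : |g (x / Δ)| = g (x / Δ) := abs_of_nonneg hgx.1
      rw [hΨeq _ (mul_nonneg hv.le (abs_nonneg _)), habs]
      refine hΦmono (mul_nonneg hv.le hc.le)
        (mul_nonneg hv.le hgx.1) ?_
      exact mul_le_mul_of_nonneg_left (hgc x hx) hv.le
    linarith
  -- put everything together
  have hcv : (0:ℝ) < c * (v:ℝ) := mul_pos hc hv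
  calc c * ⨅ w : Set.Ioi (0:ℝ), ((w : ℝ))⁻¹ * (1 + δ * Φ (w : ℝ))
      ≤ c * ((c * (v:ℝ))⁻¹ * (1 + δ * Φ (c * (v:ℝ)))) := by
        refine mul_le_mul_of_nonneg_left ?_ hc.le
        exact ciInf_le hGbdd (⟨c * (v:ℝ), hcv⟩ : Set.Ioi (0:ℝ))
    _ = ((v:ℝ))⁻¹ * (1 + δ * Φ (c * (v:ℝ))) := by
        rw [mul_inv]
        field_simp
    _ ≤ ((v:ℝ))⁻¹ * (1 + ∫ x in (0:ℝ)..Δ, Φ ((v:ℝ) * |g (x / Δ)|)) := by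
        refine mul_le_mul_of_nonneg_left ?_ (inv_nonneg.2 hv.le)
        rw [hfeq]
        rw [mul_comm c (v:ℝ)]
        linarith [key]
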